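/- Let S be a dense subsemigroup of ((0,∞),+), let B be an image partition regular matrix near zero over S (with rows indexed by a positive ordinal α and columns by δ), and let M ∈ M₀(S). Then the matrix (1̄ B 0 ; 0̄ 0 M), where 1̄ is the α×1 column of all 1's, is image partition regular near zero over S. -/
import Mathlib


noncomputable section

/-- Addition of ultrafilters on ℝ: `B ∈ uAdd p q ↔ {x | {y | x + y ∈ B} ∈ q} ∈ p`. -/
def uAdd (p q : Ultrafilter ℝ) : Ultrafilter ℝ :=
  p.bind fun x => q.map fun y => x + y

/-- `S` is a subsemigroup of `((0,∞),+)`. -/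
def IsPosSubsemigroup (S : Set ℝ) : Prop :=
  S.Nonempty ∧ S ⊆ Set.Ioi 0 ∧ ∀ x ∈ S, ∀ y ∈ S, x + y ∈ S

/-- `0` is a limit point of `S`. -/
def DenseNearZero (S : Set ℝ) : Prop := ∀ ε > 0, ∃ x ∈ S, x < ε

/-- the `i`-th entry of `A x⃗`. -/
def mEntry {ι κ : Type} (A : ι → κ → ℚ) (x : κ → ℝ) (i : ι) : ℝ :=
  ∑ᶠ j, (A i j : ℝ) * x j

/-- admissible matrix: no zero row, finitely many nonzero entries in each row. -/
def Admissible {ι κ : Type} (A : ι → κ → ℚ) : Prop :=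
  (∀ i, A i ≠ 0) ∧ ∀ i, (Function.support (A i)).Finite

/-- `A` is image partition regular over `S`. -/
def IPRover {ι κ : Type} (S : Set ℝ) (A : ι → κ → ℚ) : Prop :=
  ∀ (k : ℕ) (c : ℝ → Fin (k + 1)), ∃ x : κ → ℝ, (∀ j, x j ∈ S) ∧
    ∃ m : Fin (k + 1), ∀ i, mEntry A x i ∈ S \ {0} ∧ c (mEntry A x i) = m

/-- `A` is image partition regular near zero over `S`. -/
def IPRNearZero {ι κ : Type} (S : Set ℝ) (A : ι → κ → ℚ) : Prop :=
  ∀ (k : ℕ) (c : ℝ → Fin (k + 1)), ∀ δ > (0 : ℝ), ∃ x : κ → ℝ, (∀ j, x j ∈ S) ∧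
    ∃ m : Fin (k + 1), ∀ i, mEntry A x i ∈ S \ {0} ∧
      mEntry A x i ∈ Set.Ioo 0 δ ∧ c (mEntry A x i) = m

/-- `I(A;S)`. -/
def ISet {ι κ : Type} (S : Set ℝ) (A : ι → κ → ℚ) : Set (Ultrafilter ℝ) :=
  {p | S ∈ p ∧ ∀ P ∈ p, ∃ x : κ → ℝ, (∀ j, x j ∈ S) ∧ ∀ i, mEntry A x i ∈ P}

/-- `O⁺(S)`. -/
def Oplus (S : Set ℝ) : Set (Ultrafilter ℝ) :=
  {p | ∀ ε > (0 : ℝ), Set.Ioo 0 ε ∩ S ∈ p}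

/-- `I₀(A;S)`. -/
def I0Set {ι κ : Type} (S : Set ℝ) (A : ι → κ → ℚ) : Set (Ultrafilter ℝ) :=
  {p | S ∈ p ∧ ∀ P ∈ p, ∀ ε > (0 : ℝ), ∃ x : κ → ℝ, (∀ j, x j ∈ S) ∧
      ∀ i, mEntry A x i ∈ P ∩ Set.Ioo 0 ε}

/-- multiplication of an ultrafilter by a real constant. -/
def mulU (c : ℝ) (p : Ultrafilter ℝ) : Ultrafilter ℝ := p.map fun x => c * x

/-- `q·p = q-lim_{n} (n·p)` for `q ∈ βℕ`, `p ∈ βℝ`. -/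
def actU (q : Ultrafilter ℕ) (p : Ultrafilter ℝ) : Ultrafilter ℝ :=
  q.bind fun n => p.map fun x => (n : ℝ) * x

/-- `I` is a two-sided ideal of `T ⊆ βℝ`. -/
def IsIdealIn (T I : Set (Ultrafilter ℝ)) : Prop :=
  I.Nonempty ∧ I ⊆ T ∧ ∀ p ∈ T, ∀ q ∈ I, uAdd p q ∈ I ∧ uAdd q p ∈ I

/-- the smallest two-sided ideal of `T`. -/
def KK (T : Set (Ultrafilter ℝ)) : Set (Ultrafilter ℝ) :=
  ⋂₀ {I | IsIdealIn T I}

/-- `L` is a left ideal of `T`. -/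
def IsLeftIdealIn (T L : Set (Ultrafilter ℝ)) : Prop :=
  L.Nonempty ∧ L ⊆ T ∧ ∀ p ∈ T, ∀ q ∈ L, uAdd p q ∈ L

/-- `L` is a minimal left ideal of `T`. -/
def IsMinLeftIdealIn (T L : Set (Ultrafilter ℝ)) : Prop :=
  IsLeftIdealIn T L ∧ ∀ L', IsLeftIdealIn T L' → L' ⊆ L → L' = L

/-- `C ⊆ S` is central near zero. -/
def CentralNearZero (S C : Set ℝ) : Prop :=
  ∃ p : Ultrafilter ℝ, p ∈ KK (Oplus S) ∧ uAdd p p = p ∧ C ∈ p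

/-- `C` is central* near zero: it belongs to every minimal idempotent of `O⁺(S)`. -/
def CentralStarNearZero (S C : Set ℝ) : Prop :=
  ∀ p : Ultrafilter ℝ, p ∈ KK (Oplus S) → uAdd p p = p → C ∈ p

/-- `C` is IP* near zero: it belongs to every idempotent of `O⁺(S)`. -/
def IPStarNearZero (S C : Set ℝ) : Prop :=
  ∀ p : Ultrafilter ℝ, p ∈ Oplus S → uAdd p p = p → C ∈ p

/-- `A` is centrally image partition regular near zero over `S`. -/
def CIPRNearZero {ι κ : Type} (S : Set ℝ) (A : ι → κ → ℚ) : Prop :=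
  ∀ C : Set ℝ, CentralNearZero S C →
    ∃ x : κ → ℝ, (∀ j, x j ∈ S) ∧ ∀ i, mEntry A x i ∈ C

/-- `T` is thick near zero in `S`. -/
def ThickNearZero (S T : Set ℝ) : Prop :=
  ∃ L : Set (Ultrafilter ℝ), IsLeftIdealIn (Oplus S) L ∧ ∀ p ∈ L, T ∈ p

/-- membership in the class `𝓜₀(S)`. -/
def MemM0 {ι κ : Type} (S : Set ℝ) (A : ι → κ → ℚ) : Prop :=
  Admissible A ∧ ∀ T : Set ℝ, ThickNearZero S T →
    ∀ (k : ℕ) (c : ℝ → Fin (k + 1)), ∃ x : κ → ℝ, (∀ j, x j ∈ S) ∧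
      ∃ m : Fin (k + 1), ∀ i, mEntry A x i ∈ T ∧ c (mEntry A x i) = m

/-- `A` is (finite) image partition regular (over ℕ). -/
def IPRoverNat {u v : ℕ} (A : Fin u → Fin v → ℚ) : Prop :=
  ∀ (k : ℕ) (c : ℕ → Fin (k + 1)), ∃ x : Fin v → ℕ, ∃ m : Fin (k + 1),
    ∀ i, ∃ n : ℕ, 0 < n ∧ (n : ℚ) = ∑ j, A i j * (x j : ℚ) ∧ c n = m

/-- the compressed form of a finitely supported integer vector: delete the zeros,
then collapse equal consecutive entries. -/
def compress (r : ℕ → ℤ) (hr : (Function.support r).Finite) : List ℤ :=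
  ((hr.toFinset.sort (· ≤ ·)).map r).destutter (· ≠ ·)

/-- `M` is the Milliken–Taylor matrix `MT(a⃗)`: its rows are exactly the finitely
supported integer vectors with compressed form `a⃗`. -/
def IsMTMatrix (a : List ℤ) (M : ℕ → ℕ → ℚ) : Prop :=
  (∀ i, ∃ (r : ℕ → ℤ) (hr : (Function.support r).Finite),
      (M i = fun j => (r j : ℚ)) ∧ compress r hr = a) ∧
  ∀ (r : ℕ → ℤ) (hr : (Function.support r).Finite),
    compress r hr = a → ∃ i, M i = fun j => (r j : ℚ)

/-- the sum `f 0 + (f 1 + (⋯ + f k))` in `(βℝ, +)`. -/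
def finSumU : ∀ {k : ℕ}, (Fin (k + 1) → Ultrafilter ℝ) → Ultrafilter ℝ
  | 0, f => f 0
  | _ + 1, f => uAdd (f 0) (finSumU fun i => f i.succ)

end

/-- the matrix `(1̄ B 0 ; 0̄ 0 M)`. -/
def oneBM {ι κ ιM κM : Type} (B : ι → κ → ℚ) (M : ιM → κM → ℚ) :
    ι ⊕ ιM → Unit ⊕ κ ⊕ κM → ℚ
  | Sum.inl _, Sum.inl _ => 1
  | Sum.inl i, Sum.inr (Sum.inl j) => B i j
  | Sum.inr i, Sum.inr (Sum.inr j) => M i j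
  | _, _ => 0


section AuxLemmas

open Filter Set Function

lemma mem_uAdd {p q : Ultrafilter ℝ} {A : Set ℝ} :
    A ∈ uAdd p q ↔ {x | {y | x + y ∈ A} ∈ q} ∈ p := Iff.rfl

lemma uAdd_assoc (p q r : Ultrafilter ℝ) : uAdd (uAdd p q) r = uAdd p (uAdd q r) := by
  ext A
  simp only [mem_uAdd, Set.mem_setOf_eq, add_assoc]

lemma uAdd_mem_Oplus {S : Set ℝ} (hS : IsPosSubsemigroup S)
    {p q : Ultrafilter ℝ} (hp : p ∈ Oplus S) (hq : q ∈ Oplus S) :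
    uAdd p q ∈ Oplus S := by
  intro ε hε
  rw [mem_uAdd]
  have h2 : (0:ℝ) < ε/2 := by linarith
  apply Filter.mem_of_superset (hp (ε/2) h2)
  rintro x ⟨hxI, hxS⟩
  apply Filter.mem_of_superset (hq (ε/2) h2)
  rintro y ⟨hyI, hyS⟩
  refine ⟨⟨add_pos hxI.1 hyI.1, ?_⟩, hS.2.2 x hxS y hyS⟩
  have := hxI.2; have := hyI.2; linarith

lemma exists_I0strong {ι κ : Type} [Nonempty ι] (S : Set ℝ)
    (B : ι → κ → ℚ) (hB : IPRNearZero S B) :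
    ∃ p : Ultrafilter ℝ, S ∈ p ∧ (∀ ε > (0:ℝ), Set.Ioo 0 ε ∩ S ∈ p) ∧
      ∀ P ∈ p, ∀ ε > (0:ℝ), ∃ x : κ → ℝ, (∀ j, x j ∈ S) ∧
        ∀ i, mEntry B x i ∈ P ∩ Set.Ioo 0 ε ∩ S := by
  classical
  let Bad : Set (Set ℝ) := {P | ∃ ε > (0:ℝ), ¬ ∃ x : κ → ℝ, (∀ j, x j ∈ S) ∧
      ∀ i, mEntry B x i ∈ P ∩ Set.Ioo 0 ε ∩ S}
  let D : Set (Set ℝ) := insert S (compl '' Bad)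
  have hFIP : ∀ t ⊆ D, t.Finite → (⋂₀ t).Nonempty := by
    intro t hts ht
    rcases t.eq_empty_or_nonempty with rfl | htne
    · simp
    set εf : Set ℝ → ℝ := fun Q => if h : Qᶜ ∈ Bad then h.choose else 1 with hεf
    have hεfpos : ∀ Q, 0 < εf Q := by
      intro Q
      by_cases h : Qᶜ ∈ Bad
      · have : εf Q = h.choose := dif_pos h
        rw [this]; exact h.choose_spec.1
      · have : εf Q = 1 := dif_neg h
        rw [this]; norm_num
    set s : Finset (Set ℝ) := ht.toFinset with hs
    have hsne : s.Nonempty := by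
      obtain ⟨Q, hQ⟩ := htne
      exact ⟨Q, ht.mem_toFinset.mpr hQ⟩
    set ε : ℝ := s.inf' hsne εf with hε
    have hεpos : 0 < ε := by
      rw [hε, Finset.lt_inf'_iff]
      exact fun Q _ => hεfpos Q
    -- the pattern coloring
    have hVne : Nonempty (↥s → Prop) := ⟨fun _ => True⟩
    set k : ℕ := Fintype.card (↥s → Prop) - 1 with hk
    have hcard : Fintype.card (↥s → Prop) = k + 1 :=
      (Nat.succ_pred_eq_of_pos Fintype.card_pos).symm
    set e : (↥s → Prop) ≃ Fin (k+1) := (Fintype.equivFin _).trans (finCongr hcard) with he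
    set pat : ℝ → (↥s → Prop) := fun r Q => r ∈ (Q : Set ℝ) with hpat
    obtain ⟨x, hxS, m, hx⟩ := hB k (fun r => e (pat r)) ε hεpos
    have i0 : ι := Classical.arbitrary ι
    refine ⟨mEntry B x i0, ?_⟩
    intro Q hQ
    have hQs : Q ∈ s := ht.mem_toFinset.mpr hQ
    have hpateq : ∀ i, pat (mEntry B x i) = pat (mEntry B x i0) := by
      intro i
      apply e.injective
      rw [(hx i).2.2, (hx i0).2.2]
    by_cases hQa : mEntry B x i0 ∈ Q
    · exact hQa
    exfalso
    rcases hts hQ with rfl | hQ'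
    · exact hQa (hx i0).1.1
    · obtain ⟨P, hPBad, rfl⟩ := hQ'
      have hBadQ : (Pᶜ)ᶜ ∈ Bad := by rwa [compl_compl]
      have hεQ : εf Pᶜ = hBadQ.choose := dif_pos hBadQ
      obtain ⟨hpos, hnot⟩ := hBadQ.choose_spec
      apply hnot
      refine ⟨x, hxS, fun i => ⟨⟨?_, ?_⟩, (hx i).1.1⟩⟩
      · -- mEntry B x i ∈ (Pᶜ)ᶜ
        have h1 := congrFun (hpateq i) ⟨Pᶜ, hQs⟩
        simp only [hpat] at h1
        intro hmem
        exact hQa (by rw [← h1] at hQa ⊢; exact (h1 ▸ hmem))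
      · -- ∈ Ioo 0 choose
        have hle : ε ≤ εf Pᶜ := Finset.inf'_le εf hQs
        rw [hεQ] at hle
        have := (hx i).2.1
        exact ⟨this.1, lt_of_lt_of_le this.2 hle⟩
  have hne : (Filter.generate D).NeBot := Filter.generate_neBot_iff.mpr hFIP
  set p := Ultrafilter.of (Filter.generate D) with hp
  have hget : ∀ Q ∈ D, Q ∈ p := by
    intro Q hQ
    exact Filter.le_def.mp (Ultrafilter.of_le _) Q (Filter.mem_generate_of_mem hQ)
  have hSp : S ∈ p := hget S (Set.mem_insert _ _)
  have hthird : ∀ P ∈ p, ∀ ε > (0:ℝ), ∃ x : κ → ℝ, (∀ j, x j ∈ S) ∧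
      ∀ i, mEntry B x i ∈ P ∩ Set.Ioo 0 ε ∩ S := by
    intro P hP ε hε
    by_contra h
    have hPc : Pᶜ ∈ p := hget _ (Set.mem_insert_of_mem _ ⟨P, ⟨ε, hε, h⟩, rfl⟩)
    have := Filter.inter_mem hP hPc
    rw [Set.inter_compl_self] at this
    exact Filter.empty_notMem (p : Filter ℝ) this
  refine ⟨p, hSp, ?_, hthird⟩
  intro ε hε
  by_contra h
  have hc : (Set.Ioo 0 ε ∩ S)ᶜ ∈ p := Ultrafilter.compl_mem_iff_notMem.mpr h
  obtain ⟨x, hxS, hx⟩ := hthird _ hc ε hε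
  have i0 : ι := Classical.arbitrary ι
  exact (hx i0).1.1 ⟨(hx i0).1.2, (hx i0).2⟩

lemma finsum_sum_type' {α β : Type} (f : α ⊕ β → ℝ)
    (h1 : (Function.support fun a => f (Sum.inl a)).Finite)
    (h2 : (Function.support fun b => f (Sum.inr b)).Finite) :
    ∑ᶠ x, f x = (∑ᶠ a, f (Sum.inl a)) + ∑ᶠ b, f (Sum.inr b) := by
  have d : Disjoint (Set.range (Sum.inl : α → α ⊕ β)) (Set.range (Sum.inr : β → α ⊕ β)) :=
    Set.isCompl_range_inl_range_inr.disjoint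
  have e1 : (Set.range (Sum.inl : α → α ⊕ β) ∩ Function.support f).Finite := by
    apply Set.Finite.subset (h1.image Sum.inl)
    rintro x ⟨⟨a, rfl⟩, hx⟩
    exact ⟨a, hx, rfl⟩
  have e2 : (Set.range (Sum.inr : β → α ⊕ β) ∩ Function.support f).Finite := by
    apply Set.Finite.subset (h2.image Sum.inr)
    rintro x ⟨⟨b, rfl⟩, hx⟩
    exact ⟨b, hx, rfl⟩
  rw [← finsum_mem_univ f, ← Set.range_inl_union_range_inr,
      finsum_mem_union' d e1 e2, finsum_mem_range Sum.inl_injective,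
      finsum_mem_range Sum.inr_injective]

lemma mEntry_oneBM_inl {ι κ ιM κM : Type} (B : ι → κ → ℚ) (M : ιM → κM → ℚ)
    (hB : ∀ i, (Function.support (B i)).Finite)
    (a : ℝ) (x : κ → ℝ) (y : κM → ℝ) (i : ι) :
    mEntry (oneBM B M) (Sum.elim (fun _ => a) (Sum.elim x y)) (Sum.inl i)
      = a + mEntry B x i := by
  unfold mEntry
  rw [finsum_sum_type']
  · rw [finsum_sum_type']
    · have hu : ∑ᶠ u : Unit, ((oneBM B M (Sum.inl i) (Sum.inl u) : ℚ) : ℝ) *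
          ((Sum.elim (fun _ => a) (Sum.elim x y) : Unit ⊕ κ ⊕ κM → ℝ) (Sum.inl u)) = a := by
        rw [finsum_unique]
        show ((1:ℚ):ℝ) * a = a
        norm_num
      have hκ : (fun j : κ => ((oneBM B M (Sum.inl i) (Sum.inr (Sum.inl j)) : ℚ) : ℝ) *
          ((Sum.elim (fun _ => a) (Sum.elim x y) : Unit ⊕ κ ⊕ κM → ℝ) (Sum.inr (Sum.inl j))))
          = fun j => ((B i j : ℚ) : ℝ) * x j := rfl
      have hκM : (fun j : κM => ((oneBM B M (Sum.inl i) (Sum.inr (Sum.inr j)) : ℚ) : ℝ) *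
          ((Sum.elim (fun _ => a) (Sum.elim x y) : Unit ⊕ κ ⊕ κM → ℝ) (Sum.inr (Sum.inr j))))
          = fun _ => (0:ℝ) := by
        funext j
        show ((0:ℚ):ℝ) * _ = 0
        norm_num
      rw [hu, hκ, hκM, finsum_zero, add_zero]
    · apply Set.Finite.subset (hB i)
      intro j hj
      simp only [Function.mem_support] at hj ⊢
      intro h0
      apply hj
      show ((B i j : ℚ) : ℝ) * x j = 0
      rw [h0]; norm_num
    · apply Set.Finite.subset (Set.finite_empty)
      intro j hj
      exfalso
      apply hj
      show ((0:ℚ):ℝ) * _ = 0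
      norm_num
  · exact Set.toFinite _
  · -- support of the κ ⊕ κM part is finite
    apply Set.Finite.subset ((hB i).image Sum.inl)
    rintro (j | j) hj
    · simp only [Function.mem_support] at hj
      refine ⟨j, ?_, rfl⟩
      intro h0
      apply hj
      show ((B i j : ℚ) : ℝ) * x j = 0
      rw [h0]; norm_num
    · exfalso
      apply hj
      show ((0:ℚ):ℝ) * _ = 0
      norm_num

lemma mEntry_oneBM_inr {ι κ ιM κM : Type} (B : ι → κ → ℚ) (M : ιM → κM → ℚ)
    (hM : ∀ i, (Function.support (M i)).Finite)
    (a : ℝ) (x : κ → ℝ) (y : κM → ℝ) (i : ιM) :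
    mEntry (oneBM B M) (Sum.elim (fun _ => a) (Sum.elim x y)) (Sum.inr i)
      = mEntry M y i := by
  unfold mEntry
  rw [finsum_sum_type']
  · rw [finsum_sum_type']
    · have hu : ∑ᶠ u : Unit, ((oneBM B M (Sum.inr i) (Sum.inl u) : ℚ) : ℝ) *
          ((Sum.elim (fun _ => a) (Sum.elim x y) : Unit ⊕ κ ⊕ κM → ℝ) (Sum.inl u)) = 0 := by
        rw [finsum_unique]
        show ((0:ℚ):ℝ) * a = 0
        norm_num
      have hκ : (fun j : κ => ((oneBM B M (Sum.inr i) (Sum.inr (Sum.inl j)) : ℚ) : ℝ) *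
          ((Sum.elim (fun _ => a) (Sum.elim x y) : Unit ⊕ κ ⊕ κM → ℝ) (Sum.inr (Sum.inl j))))
          = fun _ => (0:ℝ) := by
        funext j
        show ((0:ℚ):ℝ) * _ = 0
        norm_num
      have hκM : (fun j : κM => ((oneBM B M (Sum.inr i) (Sum.inr (Sum.inr j)) : ℚ) : ℝ) *
          ((Sum.elim (fun _ => a) (Sum.elim x y) : Unit ⊕ κ ⊕ κM → ℝ) (Sum.inr (Sum.inr j))))
          = fun j => ((M i j : ℚ) : ℝ) * y j := rfl
      rw [hu, hκ, hκM, finsum_zero, zero_add, zero_add]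
    · apply Set.Finite.subset (Set.finite_empty)
      intro j hj
      exfalso
      apply hj
      show ((0:ℚ):ℝ) * _ = 0
      norm_num
    · apply Set.Finite.subset (hM i)
      intro j hj
      simp only [Function.mem_support] at hj ⊢
      intro h0
      apply hj
      show ((M i j : ℚ) : ℝ) * y j = 0
      rw [h0]; norm_num
  · exact Set.toFinite _
  · apply Set.Finite.subset ((hM i).image Sum.inr)
    rintro (j | j) hj
    · exfalso
      apply hj
      show ((0:ℚ):ℝ) * _ = 0
      norm_num
    · simp only [Function.mem_support] at hj
      refine ⟨j, ?_, rfl⟩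
      intro h0
      apply hj
      show ((M i j : ℚ) : ℝ) * y j = 0
      rw [h0]; norm_num

end AuxLemmas

/-- If `B` is image partition regular near zero over `S` and
`M ∈ 𝓜₀(S)`, then `(1̄ B 0 ; 0̄ 0 M)` is image partition regular near zero over `S`. -/
theorem stmt17 {ι κ ιM κM : Type} [Countable ι] [Countable κ] [Countable ιM]
    [Countable κM] [Nonempty ι] [Nonempty κ]
    (S : Set ℝ) (hS : IsPosSubsemigroup S) (hd : DenseNearZero S)
    (B : ι → κ → ℚ) (hBadm : Admissible B) (hB : IPRNearZero S B)
    (M : ιM → κM → ℚ) (hM : MemM0 S M) :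
    IPRNearZero S (oneBM B M) := by
  classical
  obtain ⟨p, hpS, hpO, hpI⟩ := exists_I0strong S B hB
  intro k c δ hδ
  have hδ2 : (0:ℝ) < δ/2 := by linarith
  -- key: for any small a in S there is a color m whose translated class is in p
  have key : ∀ a, a ∈ S → a ∈ Set.Ioo 0 (δ/2) →
      ∃ m, {b | b ∈ Set.Ioo 0 (δ/2) ∧ c (a + b) = m} ∈ p := by
    intro a haS haI
    by_contra h
    push_neg at h
    have hcompl : ∀ m : Fin (k+1), {b | b ∈ Set.Ioo 0 (δ/2) ∧ c (a + b) = m}ᶜ ∈ p :=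
      fun m => Ultrafilter.compl_mem_iff_notMem.mpr (h m)
    have hinter : (⋂ m : Fin (k+1), {b | b ∈ Set.Ioo 0 (δ/2) ∧ c (a + b) = m}ᶜ) ∈ p :=
      Filter.iInter_mem.mpr hcompl
    have hIoo : Set.Ioo 0 (δ/2) ∩ S ∈ p := hpO (δ/2) hδ2
    obtain ⟨b, hb1, hb2⟩ := Filter.nonempty_of_mem (Filter.inter_mem hIoo hinter)
    exact (Set.mem_iInter.mp hb2 (c (a + b))) ⟨hb1.1, rfl⟩
  set T : Set ℝ := {t | t ∈ S ∧ t ∈ Set.Ioo 0 δ ∧ ∃ a, a ∈ S ∧ a ∈ Set.Ioo 0 (δ/2) ∧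
      {b | b ∈ Set.Ioo 0 (δ/2) ∧ c (a + b) = c t} ∈ p} with hT
  have hpOplus : p ∈ Oplus S := hpO
  have hthick : ThickNearZero S T := by
    refine ⟨{r | ∃ q ∈ Oplus S, r = uAdd q p}, ⟨⟨uAdd p p, p, hpOplus, rfl⟩, ?_, ?_⟩, ?_⟩
    · rintro r ⟨q, hq, rfl⟩
      exact uAdd_mem_Oplus hS hq hpOplus
    · rintro q' hq' r ⟨q, hq, rfl⟩
      exact ⟨uAdd q' q, uAdd_mem_Oplus hS hq' hq, (uAdd_assoc _ _ _).symm⟩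
    · rintro r ⟨q, hq, rfl⟩
      rw [mem_uAdd]
      apply Filter.mem_of_superset (hq (δ/2) hδ2)
      rintro a ⟨haI, haS⟩
      obtain ⟨m, hm⟩ := key a haS haI
      show {y | a + y ∈ T} ∈ p
      apply Filter.mem_of_superset (Filter.inter_mem hm hpS)
      rintro b ⟨⟨hbI, hbc⟩, hbS⟩
      show a + b ∈ T
      rw [hT]
      refine ⟨hS.2.2 a haS b hbS, ⟨add_pos haI.1 hbI.1, ?_⟩, a, haS, haI, ?_⟩
      · have := haI.2; have := hbI.2; linarith
      · rw [hbc]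
        exact hm
  obtain ⟨y, hyS, m0, hm0⟩ := hM.2 T hthick k c
  have hgoodm : ∃ m : Fin (k+1), (∃ a, a ∈ S ∧ a ∈ Set.Ioo 0 (δ/2) ∧
      {b | b ∈ Set.Ioo 0 (δ/2) ∧ c (a + b) = m} ∈ p) ∧
      ∀ i : ιM, mEntry M y i ∈ T ∧ c (mEntry M y i) = m := by
    by_cases hne : Nonempty ιM
    · refine ⟨m0, ?_, hm0⟩
      obtain ⟨i1⟩ := hne
      have h1 := (hm0 i1).1
      rw [hT] at h1
      have h2 := h1.2.2
      rwa [(hm0 i1).2] at h2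
    · obtain ⟨a, haS, halt⟩ := hd (δ/2) hδ2
      have ha0 : 0 < a := hS.2.1 haS
      obtain ⟨m, hm⟩ := key a haS ⟨ha0, halt⟩
      exact ⟨m, ⟨a, haS, ⟨ha0, halt⟩, hm⟩, fun i => absurd (Nonempty.intro i) hne⟩
  obtain ⟨m, ⟨a, haS, haI, hmp⟩, hMy⟩ := hgoodm
  obtain ⟨x, hxS, hx⟩ := hpI _ hmp (δ/2) hδ2
  refine ⟨Sum.elim (fun _ => a) (Sum.elim x y), ?_, m, ?_⟩
  · rintro (j | j | j)
    exacts [haS, hxS j, hyS j]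
  · rintro (i | i)
    · rw [mEntry_oneBM_inl B M hBadm.2 a x y i]
      obtain ⟨⟨hP, hbI2⟩, hbS⟩ := hx i
      obtain ⟨hbI, hbc⟩ := hP
      have hpos : 0 < a + mEntry B x i := add_pos haI.1 hbI.1
      refine ⟨⟨hS.2.2 a haS _ hbS, ne_of_gt hpos⟩, ⟨hpos, ?_⟩, hbc⟩
      have := haI.2; have := hbI.2; linarith
    · rw [mEntry_oneBM_inr B M hM.1.2 a x y i]
      have h1 := (hMy i).1
      rw [hT] at h1
      exact ⟨⟨h1.1, ne_of_gt h1.2.1.1⟩, h1.2.1, (hMy i).2⟩
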